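/- Normalization of the rank-one heat kernel: for λ > 0, t > 0 and x ≥ 0, ∫_0^∞ Γ(t,x,y) dμ_λ(y) = 1, where Γ(t,x,y) = (2t)^{−λ} e^{−(x+y)/t} Γ(λ) Ĩ_{λ−1}(2√(xy)/t) and dμ_λ(y) = (2^λ/Γ(λ)) y^{λ−1} dy. -/

import Mathlib

/-- `B(w) = Γ(λ) Ĩ_{λ−1}(2√w) = Γ(λ) ∑ₙ wⁿ/(Γ(n+λ) n!)`. -/
noncomputable def Bfun (l : ℝ) (w : ℝ) : ℝ :=
  Real.Gamma l * ∑' n : ℕ, w ^ n / (Real.Gamma ((n : ℝ) + l) * (n.factorial : ℝ))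

/-- The rank-one Laguerre heat kernel
`Γ(t,x,y) = (2t)^{−λ} e^{−(x+y)/t} Γ(λ) Ĩ_{λ−1}(2√(xy)/t)`. -/
noncomputable def heatKer (l t x y : ℝ) : ℝ :=
  (2 * t) ^ (-l) * Real.exp (-(x + y) / t) * Bfun l (x * y / t ^ 2)

open MeasureTheory Real Set

lemma aux_integral_18 {a r : ℝ} (ha : 0 < a) (hr : 0 < r) :
    ∫ y in Ioi (0 : ℝ), Real.exp (-(r * y)) * y ^ (a - 1) = (1 / r) ^ a * Real.Gamma a := by
  rw [← Real.integral_rpow_mul_exp_neg_mul_Ioi ha hr]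
  exact setIntegral_congr_fun measurableSet_Ioi fun y _ => mul_comm _ _

lemma aux_integrable_18 {a r : ℝ} (ha : 0 < a) (hr : 0 < r) :
    IntegrableOn (fun y : ℝ => Real.exp (-(r * y)) * y ^ (a - 1)) (Ioi 0) := by
  have h := integrableOn_rpow_mul_exp_neg_mul_rpow (by linarith : (-1 : ℝ) < a - 1)
    (zero_lt_one : (0:ℝ) < 1) hr
  refine (h.congr_fun (fun y hy => ?_) measurableSet_Ioi)
  simp only [Real.rpow_one]
  ring

/-- Normalization of the rank-one heat kernel: for `λ > 0`, `t > 0`, `x ≥ 0`,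
`∫_0^∞ Γ(t,x,y) dμ_λ(y) = 1` where `dμ_λ(y) = (2^λ/Γ(λ)) y^{λ−1} dy`. -/
theorem stmt_18 (l : ℝ) (hl : 0 < l) (t x : ℝ) (ht : 0 < t) (hx : 0 ≤ x) :
    ∫ y in Set.Ioi (0 : ℝ),
        heatKer l t x y * ((2 ^ l / Real.Gamma l) * y ^ (l - 1)) = 1 := by
  have ht' : t ≠ 0 := ht.ne'
  have h2t : (0 : ℝ) < 2 * t := by linarith
  have hGl : Real.Gamma l ≠ 0 := (Real.Gamma_pos_of_pos hl).ne'
  -- the coefficients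
  set C : ℕ → ℝ := fun n =>
    ((2 * t) ^ (-l) * Real.exp (-(x / t)) * 2 ^ l) *
      (x ^ n / (t ^ (2 * n) * Real.Gamma ((n : ℝ) + l) * (n.factorial : ℝ))) with hC
  have hCnn : ∀ n, 0 ≤ C n := fun n => by
    apply mul_nonneg (by positivity)
    exact div_nonneg (pow_nonneg hx n) (by positivity)
  -- the summand functions
  set g : ℕ → ℝ → ℝ := fun n y =>
    C n * (Real.exp (-(t⁻¹ * y)) * y ^ ((n : ℝ) + l - 1)) with hg
  -- pointwise identity of the integrand as a tsum
  have hpt : ∀ y ∈ Ioi (0 : ℝ),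
      heatKer l t x y * ((2 ^ l / Real.Gamma l) * y ^ (l - 1)) = ∑' n, g n y := by
    intro y hy
    have hy0 : (0 : ℝ) < y := hy
    rw [heatKer, Bfun]
    rw [show (2 * t) ^ (-l) * Real.exp (-(x + y) / t) *
        (Real.Gamma l * ∑' n : ℕ, (x * y / t ^ 2) ^ n /
          (Real.Gamma ((n : ℝ) + l) * (n.factorial : ℝ))) *
        ((2 ^ l / Real.Gamma l) * y ^ (l - 1))
      = ∑' n : ℕ, ((2 * t) ^ (-l) * Real.exp (-(x + y) / t) * Real.Gamma l *
          (2 ^ l / Real.Gamma l * y ^ (l - 1))) *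
          ((x * y / t ^ 2) ^ n / (Real.Gamma ((n : ℝ) + l) * (n.factorial : ℝ))) from by
        rw [tsum_mul_left]; ring]
    refine tsum_congr fun n => ?_
    have hGn : Real.Gamma ((n : ℝ) + l) ≠ 0 :=
      (Real.Gamma_pos_of_pos (by positivity)).ne'
    have hfn : ((n.factorial : ℝ)) ≠ 0 := Nat.cast_ne_zero.mpr n.factorial_ne_zero
    have hexp : Real.exp (-(x + y) / t) = Real.exp (-(x / t)) * Real.exp (-(t⁻¹ * y)) := by
      rw [← Real.exp_add]; congr 1; field_simp; ring
    have hyp : (y : ℝ) ^ (n : ℕ) * y ^ (l - 1) = y ^ ((n : ℝ) + l - 1) := by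
      rw [← Real.rpow_natCast y n, ← Real.rpow_add hy0]
      ring_nf
    have hw : (x * y / t ^ 2) ^ n = x ^ n * y ^ n / t ^ (2 * n) := by
      rw [div_pow, mul_pow, ← pow_mul]
    rw [hg, hC, hexp, hw]
    field_simp
    rw [← hyp]
    ring
  rw [setIntegral_congr_fun measurableSet_Ioi hpt]
  -- integrability of each term
  have hint : ∀ n : ℕ, IntegrableOn (g n) (Ioi 0) := by
    intro n
    exact ((aux_integrable_18 (a := (n : ℝ) + l) (by positivity)
      (inv_pos.mpr ht)).const_mul (C n))
  -- value of each integral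
  set E : ℝ := (2 * t) ^ (-l) * Real.exp (-(x / t)) * 2 ^ l * t ^ l with hE
  have hval : ∀ n : ℕ, ∫ y in Ioi (0 : ℝ), g n y = E * ((x / t) ^ n / n.factorial) := by
    intro n
    rw [hg]
    simp only
    rw [integral_const_mul, aux_integral_18 (by positivity : (0:ℝ) < (n : ℝ) + l)
      (inv_pos.mpr ht), one_div, inv_inv]
    have htr : t ^ ((n : ℝ) + l) = t ^ (n : ℕ) * t ^ l := by
      rw [Real.rpow_add ht, Real.rpow_natCast]
    have hGn : Real.Gamma ((n : ℝ) + l) ≠ 0 :=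
      (Real.Gamma_pos_of_pos (by positivity)).ne'
    have hfn : ((n.factorial : ℝ)) ≠ 0 := Nat.cast_ne_zero.mpr n.factorial_ne_zero
    rw [hC, hE, htr, div_pow]
    field_simp
    rw [pow_mul, sq]
    ring
  -- summability of the norms
  have hsumE : Summable fun n : ℕ => E * ((x / t) ^ n / n.factorial) :=
    (Real.summable_pow_div_factorial (x / t)).mul_left E
  have hnorm : ∀ n : ℕ, (∫ y in Ioi (0 : ℝ), ‖g n y‖) = ∫ y in Ioi (0 : ℝ), g n y := by
    intro n
    refine setIntegral_congr_fun measurableSet_Ioi fun y hy => ?_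
    have hy0 : (0 : ℝ) < y := hy
    exact Real.norm_of_nonneg (mul_nonneg (hCnn n) (by positivity))
  have hsum : Summable fun n : ℕ => ∫ y in Ioi (0 : ℝ), ‖g n y‖ := by
    simp_rw [hnorm, hval]; exact hsumE
  rw [← MeasureTheory.integral_tsum_of_summable_integral_norm hint hsum]
  -- evaluate the sum
  have : ∑' n : ℕ, ∫ y in Ioi (0 : ℝ), g n y = E * Real.exp (x / t) := by
    rw [tsum_congr hval, tsum_mul_left]
    congr 1
    rw [Real.exp_eq_exp_ℝ, NormedSpace.exp_eq_tsum_div]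
  rw [this, hE]
  have h2l : (2 : ℝ) ^ l * t ^ l = (2 * t) ^ l := (Real.mul_rpow (by norm_num) ht.le).symm
  calc (2 * t) ^ (-l) * Real.exp (-(x / t)) * 2 ^ l * t ^ l * Real.exp (x / t)
      = ((2 * t) ^ (-l) * (2 * t) ^ l) * (Real.exp (-(x / t)) * Real.exp (x / t)) := by
        rw [← h2l]; ring
    _ = 1 := by
        rw [← Real.rpow_add h2t, ← Real.exp_add]
        simp
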